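/- Assume the eigenvalues of -A∂_x + G (constant coefficient operator on L²(ℝ;ℂⁿ) with domain H¹) all satisfy Re λ < -α_0, where A is real diagonalizable with distinct real nonzero eigenvalues d_1,...,d_n via P A P⁻¹ = D. Then each diagonal entry γ_j of the diagonal part of PGP⁻¹ satisfies γ_j ≤ -α_0. -/

import Mathlib

open Polynomial Matrix Complex Finset Equiv

namespace Stmt15Aux


lemma multiset_prod_le (s : Multiset ℂ) (f g : ℂ → ℝ)
    (h0 : ∀ a ∈ s, 0 ≤ f a) (h1 : ∀ a ∈ s, f a ≤ g a) :
    (s.map f).prod ≤ (s.map g).prod := by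
  induction s using Multiset.induction with
  | empty => simp
  | cons a s ih =>
    simp only [Multiset.map_cons, Multiset.prod_cons]
    have hf0 : 0 ≤ (s.map f).prod := Multiset.prod_nonneg (by
      intro x hx; obtain ⟨a', ha', rfl⟩ := Multiset.mem_map.1 hx
      exact h0 a' (Multiset.mem_cons_of_mem ha'))
    exact mul_le_mul (h1 a (Multiset.mem_cons_self a s))
      (ih (fun a' ha' => h0 a' (Multiset.mem_cons_of_mem ha'))
          (fun a' ha' => h1 a' (Multiset.mem_cons_of_mem ha')))
      hf0 (le_trans (h0 a (Multiset.mem_cons_self a s)) (h1 a (Multiset.mem_cons_self a s)))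

lemma multiset_norm_prod (s : Multiset ℂ) : ‖s.prod‖ = (s.map fun z => ‖z‖).prod := by
  induction s using Multiset.induction with
  | empty => simp
  | cons a s ih => simp [Multiset.prod_cons, norm_mul, ih]

lemma eval_norm_le (p : ℂ[X]) (m : ℕ) (hp : p.degree < (m : ℕ)) (ξ : ℝ) (hξ : 1 ≤ ξ) :
    ‖p.eval (ξ : ℂ)‖ * ξ ≤ (∑ k ∈ range m, ‖p.coeff k‖) * ξ ^ m := by
  have hξ0 : (0:ℝ) ≤ ξ := by linarith
  rcases eq_or_ne p 0 with rfl | hp0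
  · simp only [eval_zero, norm_zero, zero_mul]
    positivity
  have hnd : p.natDegree < m := (natDegree_lt_iff_degree_lt hp0).2 hp
  rw [eval_eq_sum_range' hnd]
  calc ‖∑ k ∈ range m, p.coeff k * (ξ:ℂ) ^ k‖ * ξ
      ≤ (∑ k ∈ range m, ‖p.coeff k‖ * ξ ^ k) * ξ := by
        refine mul_le_mul_of_nonneg_right ?_ hξ0
        refine (norm_sum_le _ _).trans (le_of_eq ?_)
        refine Finset.sum_congr rfl fun k _ => ?_
        rw [norm_mul, norm_pow, Complex.norm_real, Real.norm_eq_abs, _root_.abs_of_nonneg hξ0]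
    _ = ∑ k ∈ range m, ‖p.coeff k‖ * ξ ^ (k+1) := by
        rw [Finset.sum_mul]; refine Finset.sum_congr rfl fun k _ => by ring
    _ ≤ ∑ k ∈ range m, ‖p.coeff k‖ * ξ ^ m := by
        refine Finset.sum_le_sum fun k hk => ?_
        have : k + 1 ≤ m := Finset.mem_range.1 hk
        exact mul_le_mul_of_nonneg_left (pow_le_pow_right₀ hξ this) (norm_nonneg _)
    _ = _ := by rw [Finset.sum_mul]



variable {n : ℕ} (B : Matrix (Fin n) (Fin n) ℂ) (δ : Fin n → ℂ) (j : Fin n)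

noncomputable def Mp (s : ℂ) : Matrix (Fin n) (Fin n) ℂ[X] :=
  Matrix.of fun k l => C (if k = l then -(Complex.I * δ k) else 0) * X +
    C ((if k = l then s else 0) - B k l)

-- evaluation of the determinant polynomial
lemma eval_det (s : ℂ) (z : ℂ) :
    ((Mp B δ s).det).eval z =
      ((s • (1 : Matrix (Fin n) (Fin n) ℂ)) - (B + (Complex.I * z) • Matrix.diagonal δ)).det := by
  have := RingHom.map_det (evalRingHom z) (Mp B δ s)
  rw [show (evalRingHom z) ((Mp B δ s).det) = ((Mp B δ s).det).eval z from rfl] at this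
  rw [this]
  congr 1
  ext k l
  by_cases hkl : k = l
  · subst hkl
    simp [Mp, Matrix.diagonal_apply_eq, Matrix.one_apply_eq]
    ring
  · simp [Mp, hkl, Matrix.diagonal_apply_ne _ hkl, Matrix.one_apply_ne hkl]



variable {n : ℕ}

lemma charpoly_eval (N : Matrix (Fin n) (Fin n) ℂ) (s : ℂ) :
    N.charpoly.eval s = ((s • (1 : Matrix (Fin n) (Fin n) ℂ)) - N).det := by
  have h0 : N.charpoly.eval s = ((Matrix.charmatrix N).map (evalRingHom s)).det := by
    have := RingHom.map_det (evalRingHom s) (Matrix.charmatrix N)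
    rw [RingHom.mapMatrix_apply] at this
    rw [← this]; rfl
  rw [h0]
  congr 1
  ext k l
  by_cases hkl : k = l
  · subst hkl
    simp [Matrix.charmatrix_apply_eq, Matrix.one_apply_eq]
  · simp [Matrix.charmatrix_apply_ne _ _ _ hkl, Matrix.one_apply_ne hkl]

lemma root_mem_spectrum (N : Matrix (Fin n) (Fin n) ℂ) (a : ℂ) (ha : a ∈ N.charpoly.roots) :
    a ∈ spectrum ℂ N := by
  have hroot : N.charpoly.IsRoot a := (Polynomial.mem_roots'.1 ha).2
  have hdet : ((a • (1 : Matrix (Fin n) (Fin n) ℂ)) - N).det = 0 := by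
    rw [← charpoly_eval]; exact hroot
  rw [spectrum.mem_iff]
  intro hunit
  rw [Algebra.algebraMap_eq_smul_one] at hunit
  have := (Matrix.isUnit_iff_isUnit_det _).1 hunit
  rw [hdet] at this
  simp at this

lemma fact_exists (N : Matrix (Fin n) (Fin n) ℂ) :
    ∃ R : Multiset ℂ, R.card = n ∧ (∀ a ∈ R, a ∈ spectrum ℂ N) ∧
      ∀ s : ℂ, ((s • (1 : Matrix (Fin n) (Fin n) ℂ)) - N).det = (R.map (fun a => s - a)).prod := by
  refine ⟨N.charpoly.roots, ?_, fun a ha => root_mem_spectrum N a ha, fun s => ?_⟩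
  · rw [Polynomial.splits_iff_card_roots.1 (IsAlgClosed.splits _),
      Matrix.charpoly_natDegree_eq_dim, Fintype.card_fin]
  · rw [← charpoly_eval]
    conv_lhs => rw [(IsAlgClosed.splits N.charpoly).eq_prod_roots_of_monic
      N.charpoly_monic]
    rw [Polynomial.eval_multiset_prod, Multiset.map_map]
    congr 1
    refine Multiset.map_congr rfl fun a _ => ?_
    simp



variable {n : ℕ} (B : Matrix (Fin n) (Fin n) ℂ) (δ : Fin n → ℂ) (j : Fin n)

variable (hδj : δ j = 0)

include hδj in
lemma entry_deg (s : ℂ) (k l : Fin n) :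
    (Mp B δ s k l).degree ≤ ((if k = l ∧ k ≠ j then 1 else 0 : ℕ) : WithBot ℕ) := by
  rcases eq_or_ne k l with rfl | hkl
  · rcases eq_or_ne k j with rfl | hkj
    · have h : Mp B δ s k k = C (s - B k k) := by simp [Mp, hδj]
      rw [h, if_neg (by simp)]
      exact_mod_cast degree_C_le
    · have h : Mp B δ s k k = C (-(Complex.I * δ k)) * X + C (s - B k k) := by simp [Mp]
      rw [h, if_pos ⟨rfl, hkj⟩]
      exact_mod_cast degree_linear_le
  · have h : Mp B δ s k l = C (-(B k l)) := by simp [Mp, hkl]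
    rw [h, if_neg fun hc => hkl hc.1]
    exact_mod_cast degree_C_le

include hδj in
lemma term_deg (s : ℂ) (σ : Equiv.Perm (Fin n)) :
    (∏ k, Mp B δ s (σ k) k).degree ≤
      (((univ.filter fun k => σ k = k ∧ k ≠ j).card : ℕ) : WithBot ℕ) := by
  calc (∏ k, Mp B δ s (σ k) k).degree ≤ ∑ k, (Mp B δ s (σ k) k).degree :=
        degree_prod_le _ _
    _ ≤ ∑ k : Fin n, ((if σ k = k ∧ k ≠ j then 1 else 0 : ℕ) : WithBot ℕ) := by
        refine Finset.sum_le_sum fun k _ => ?_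
        refine (entry_deg B δ j hδj s (σ k) k).trans ?_
        by_cases h1 : σ k = k
        · rw [h1]
        · simp [h1]
    _ = (((∑ k : Fin n, if σ k = k ∧ k ≠ j then 1 else 0 : ℕ)) : WithBot ℕ) := by
        rw [Nat.cast_sum]
    _ = _ := by rw [Finset.card_filter]

lemma card_le_all (σ : Equiv.Perm (Fin n)) :
    (univ.filter fun k => σ k = k ∧ k ≠ j).card ≤ n - 1 := by
  have hsub : (univ.filter fun k => σ k = k ∧ k ≠ j) ⊆ univ.erase j := by
    intro k hk
    simp only [mem_filter, mem_univ, true_and] at hk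
    exact Finset.mem_erase.2 ⟨hk.2, mem_univ k⟩
  have := Finset.card_le_card hsub
  rwa [Finset.card_erase_of_mem (mem_univ j), Finset.card_univ, Fintype.card_fin] at this

lemma card_le_ne (σ : Equiv.Perm (Fin n)) (hσ : σ ≠ 1) :
    (univ.filter fun k => σ k = k ∧ k ≠ j).card ≤ n - 2 ∧ 2 ≤ n := by
  have h2 : 2 ≤ σ.support.card := Equiv.Perm.two_le_card_support_of_ne_one hσ
  have hn : 2 ≤ n := le_trans h2 (by
    simpa [Finset.card_univ] using Finset.card_le_card (Finset.subset_univ σ.support))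
  refine ⟨?_, hn⟩
  have hsub : (univ.filter fun k => σ k = k ∧ k ≠ j) ⊆ (σ.support ∪ {j})ᶜ := by
    intro k hk
    simp only [mem_filter, mem_univ, true_and] at hk
    simp only [Finset.mem_compl, Finset.mem_union, Finset.mem_singleton,
      Equiv.Perm.mem_support, not_or, not_not]
    exact ⟨hk.1, hk.2⟩
  refine (Finset.card_le_card hsub).trans ?_
  rw [Finset.card_compl, Fintype.card_fin]
  have : 2 ≤ (σ.support ∪ {j}).card :=
    le_trans h2 (Finset.card_le_card Finset.subset_union_left)
  omega

include hδj in
lemma det_deg_le (s : ℂ) :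
    ((Mp B δ s).det).degree ≤ (((n - 1 : ℕ)) : WithBot ℕ) := by
  rw [Matrix.det_apply']
  refine (degree_sum_le _ _).trans ?_
  refine Finset.sup_le fun σ _ => ?_
  calc ((((Equiv.Perm.sign σ : ℤ) : ℂ[X])) * ∏ k, Mp B δ s (σ k) k).degree
      ≤ (((Equiv.Perm.sign σ : ℤ) : ℂ[X])).degree + (∏ k, Mp B δ s (σ k) k).degree :=
        degree_mul_le _ _
    _ ≤ 0 + (((univ.filter fun k => σ k = k ∧ k ≠ j).card : ℕ) : WithBot ℕ) :=
        add_le_add (degree_intCast_le _) (term_deg B δ j hδj s σ)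
    _ ≤ (((n - 1 : ℕ)) : WithBot ℕ) := by
        rw [zero_add]
        exact_mod_cast card_le_all j σ

include hδj in
lemma det_deg_lt (s : ℂ) (hsj : Mp B δ s j j = 0) :
    ((Mp B δ s).det).degree < (((n - 1 : ℕ)) : WithBot ℕ) := by
  rw [Matrix.det_apply']
  refine (degree_sum_le _ _).trans_lt ?_
  rw [Finset.sup_lt_iff (WithBot.bot_lt_coe _)]
  intro σ _
  rcases eq_or_ne σ 1 with rfl | hσ
  · have hz : (∏ k, Mp B δ s (((1 : Equiv.Perm (Fin n))) k) k) = 0 :=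
      Finset.prod_eq_zero (Finset.mem_univ j) (by simpa using hsj)
    rw [hz, mul_zero, degree_zero]
    exact WithBot.bot_lt_coe _
  · obtain ⟨hcard, hn⟩ := card_le_ne j σ hσ
    have h1 : ((((Equiv.Perm.sign σ : ℤ) : ℂ[X])) * ∏ k, Mp B δ s (σ k) k).degree
        ≤ (((n - 2 : ℕ)) : WithBot ℕ) := by
      calc ((((Equiv.Perm.sign σ : ℤ) : ℂ[X])) * ∏ k, Mp B δ s (σ k) k).degree
          ≤ (((Equiv.Perm.sign σ : ℤ) : ℂ[X])).degree + (∏ k, Mp B δ s (σ k) k).degree :=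
            degree_mul_le _ _
        _ ≤ 0 + (((univ.filter fun k => σ k = k ∧ k ≠ j).card : ℕ) : WithBot ℕ) :=
            add_le_add (degree_intCast_le _) (term_deg B δ j hδj s σ)
        _ ≤ (((n - 2 : ℕ)) : WithBot ℕ) := by
            rw [zero_add]; exact_mod_cast hcard
    refine h1.trans_lt ?_
    exact_mod_cast Nat.sub_lt_sub_left (by omega) (by omega)

include hδj in
lemma det_coeff (hδ : ∀ k, k ≠ j → δ k ≠ 0) (s : ℂ) (hs : s - B j j = 1) :
    ((Mp B δ s).det).coeff (n - 1) = ∏ k ∈ univ.erase j, -(Complex.I * δ k) := by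
  have hall : ∀ k : Fin n, Mp B δ s k k = C (-(Complex.I * δ k)) * X + C (s - B k k) := by
    intro k; simp [Mp]
  have hfj : Mp B δ s j j = C 1 := by
    rw [hall j, hδj, hs]; simp
  have hne : ∀ k : Fin n, Mp B δ s k k ≠ 0 := by
    intro k
    rcases eq_or_ne k j with rfl | hk
    · rw [hfj]; simp
    · rw [hall k]
      intro hz
      have := natDegree_linear (a := -(Complex.I * δ k)) (b := s - B k k)
        (by simpa using hδ k hk)
      rw [hz] at this
      simp at this
  have hsum : (∑ k : Fin n, if k = j then 0 else 1) = n - 1 := by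
    have h1 : (∑ k : Fin n, if k = j then 0 else 1)
        = (univ.filter (fun k : Fin n => ¬ (k = j))).card := by
      rw [Finset.card_filter]
      refine Finset.sum_congr rfl fun k _ => ?_
      by_cases h : k = j <;> simp [h]
    rw [h1, Finset.filter_not, Finset.filter_eq', if_pos (Finset.mem_univ j)]
    rw [Finset.card_sdiff_of_subset (by simp)]
    simp
  have hndeg : (∏ k, Mp B δ s k k).natDegree = n - 1 := by
    rw [Polynomial.natDegree_prod _ _ fun k _ => hne k]
    have h2 : ∀ k : Fin n, (Mp B δ s k k).natDegree = if k = j then 0 else 1 := by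
      intro k
      rcases eq_or_ne k j with rfl | hk
      · simp [hfj]
      · rw [hall k, if_neg hk]
        exact natDegree_linear (by simpa using hδ k hk)
    rw [Finset.sum_congr rfl fun k _ => h2 k, hsum]
  have hlead : (∏ k, Mp B δ s k k).leadingCoeff = ∏ k ∈ univ.erase j, -(Complex.I * δ k) := by
    rw [Polynomial.leadingCoeff_prod]
    rw [← Finset.prod_erase_mul _ _ (Finset.mem_univ j)]
    have hjl : (Mp B δ s j j).leadingCoeff = 1 := by rw [hfj]; simp
    rw [hjl, mul_one]
    refine Finset.prod_congr rfl fun k hk => ?_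
    have hk' : k ≠ j := (Finset.mem_erase.1 hk).1
    rw [hall k]
    exact leadingCoeff_linear (by simpa using hδ k hk')
  -- now the determinant coefficient
  rw [Matrix.det_apply']
  rw [Polynomial.finset_sum_coeff]
  have hterm : ∀ σ : Equiv.Perm (Fin n), σ ≠ 1 →
      ((((Equiv.Perm.sign σ : ℤ) : ℂ[X])) * ∏ k, Mp B δ s (σ k) k).coeff (n - 1) = 0 := by
    intro σ hσ
    refine Polynomial.coeff_eq_zero_of_degree_lt ?_
    obtain ⟨hcard, hn⟩ := card_le_ne j σ hσ
    calc ((((Equiv.Perm.sign σ : ℤ) : ℂ[X])) * ∏ k, Mp B δ s (σ k) k).degree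
        ≤ (((Equiv.Perm.sign σ : ℤ) : ℂ[X])).degree + (∏ k, Mp B δ s (σ k) k).degree :=
          degree_mul_le _ _
      _ ≤ 0 + (((univ.filter fun k => σ k = k ∧ k ≠ j).card : ℕ) : WithBot ℕ) :=
          add_le_add (degree_intCast_le _) (term_deg B δ j hδj s σ)
      _ < (((n - 1 : ℕ)) : WithBot ℕ) := by
          rw [zero_add]
          exact_mod_cast lt_of_le_of_lt hcard (by omega)
  rw [Finset.sum_eq_single (1 : Equiv.Perm (Fin n))
    (fun σ _ hσ => hterm σ hσ) (by intro h; exact absurd (Finset.mem_univ _) h)]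
  simp only [Equiv.Perm.sign_one, Units.val_one, Int.cast_one, one_mul, Equiv.Perm.one_apply]
  rw [← hndeg, ← Polynomial.leadingCoeff]
  exact hlead

-- re ≤ norm helper
lemma re_le_norm' (z : ℂ) : z.re ≤ ‖z‖ := by
  exact Complex.re_le_norm z

lemma key (α₀ γ : ℝ) (hε : 0 < γ + α₀)
    (B : Matrix (Fin n) (Fin n) ℂ) (δ : Fin n → ℂ) (j : Fin n)
    (hδj : δ j = 0) (hδ : ∀ k, k ≠ j → δ k ≠ 0) (hBj : B j j = (γ : ℂ))
    (hsp : ∀ ξ : ℝ, ∀ μ ∈ spectrum ℂ (B + (Complex.I * ξ) • Matrix.diagonal δ), μ.re < -α₀) :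
    False := by
  set ε : ℝ := γ + α₀ with hεdef
  set c : ℝ := ε / (1 + ε) with hcdef
  have hc0 : 0 < c := div_pos hε (by linarith)
  have hcε : c * (1 + ε) = ε := by
    rw [hcdef, div_mul_cancel₀ _ (ne_of_gt (by linarith : (0:ℝ) < 1 + ε))]
  set gp : ℂ[X] := (Mp B δ (γ : ℂ)).det with hgp
  set hp : ℂ[X] := (Mp B δ ((γ : ℂ) + 1)).det with hhp
  set L : ℂ := ∏ k ∈ univ.erase j, -(Complex.I * δ k) with hLdef
  have hL : L ≠ 0 := by
    refine Finset.prod_ne_zero_iff.2 fun k hk => ?_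
    simpa using hδ k (Finset.mem_erase.1 hk).1
  have hgdeg : gp.degree < (((n - 1 : ℕ)) : WithBot ℕ) := by
    refine det_deg_lt B δ j hδj _ ?_
    have h : Mp B δ (γ:ℂ) j j = C (-(Complex.I * δ j)) * X + C ((γ:ℂ) - B j j) := by
      simp [Mp]
    rw [h, hδj, hBj]
    simp
  have hhcoeff : hp.coeff (n - 1) = L :=
    det_coeff B δ j hδj hδ _ (by rw [hBj]; ring)
  have hhdeg : hp.degree ≤ (((n - 1 : ℕ)) : WithBot ℕ) := det_deg_le B δ j hδj _
  set r : ℂ[X] := hp - C L * X ^ (n - 1) with hrdef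
  have hrdeg : r.degree < (((n - 1 : ℕ)) : WithBot ℕ) := by
    rw [Polynomial.degree_lt_iff_coeff_zero]
    intro m hm
    rcases eq_or_lt_of_le hm with rfl | hm'
    · simp [hrdef, Polynomial.coeff_sub, hhcoeff, Polynomial.coeff_C_mul,
        Polynomial.coeff_X_pow]
    · have h1 : hp.coeff m = 0 :=
        Polynomial.coeff_eq_zero_of_degree_lt (hhdeg.trans_lt (by exact_mod_cast hm'))
      have h2 : m ≠ n - 1 := by omega
      simp [hrdef, Polynomial.coeff_sub, h1, Polynomial.coeff_C_mul,
        Polynomial.coeff_X_pow, h2, Ne.symm h2]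
  -- pointwise comparison
  have hpoint : ∀ ξ : ℝ, c ^ n * ‖hp.eval (ξ : ℂ)‖ ≤ ‖gp.eval (ξ : ℂ)‖ := by
    intro ξ
    obtain ⟨R, hcard, hmem, hprod⟩ :=
      fact_exists (B + (Complex.I * (ξ:ℂ)) • Matrix.diagonal δ)
    have hre : ∀ a ∈ R, a.re < -α₀ := fun a ha => hsp ξ a (hmem a ha)
    have hg : ‖gp.eval (ξ:ℂ)‖ = (R.map fun a => ‖(γ:ℂ) - a‖).prod := by
      rw [hgp, eval_det, hprod, multiset_norm_prod, Multiset.map_map]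
      rfl
    have hh : ‖hp.eval (ξ:ℂ)‖ = (R.map fun a => ‖((γ:ℂ) + 1) - a‖).prod := by
      rw [hhp, eval_det, hprod, multiset_norm_prod, Multiset.map_map]
      rfl
    have helt : ∀ a ∈ R, c * ‖((γ:ℂ) + 1) - a‖ ≤ ‖(γ:ℂ) - a‖ := by
      intro a ha
      have h1 : ε ≤ ‖(γ:ℂ) - a‖ := by
        have h2 : ε ≤ ((γ:ℂ) - a).re := by
          have := hre a ha
          simp only [Complex.sub_re, Complex.ofReal_re]
          linarith
        exact h2.trans (re_le_norm' _)
      have ht : ‖((γ:ℂ) + 1) - a‖ ≤ ‖(γ:ℂ) - a‖ + 1 := by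
        have h3 : ((γ:ℂ) + 1) - a = ((γ:ℂ) - a) + 1 := by ring
        rw [h3]
        simpa using norm_add_le ((γ:ℂ) - a) 1
      nlinarith [norm_nonneg (((γ:ℂ) + 1) - a), norm_nonneg ((γ:ℂ) - a)]
    calc c ^ n * ‖hp.eval (ξ:ℂ)‖
        = (R.map fun a => c * ‖((γ:ℂ) + 1) - a‖).prod := by
          rw [hh, Multiset.prod_map_mul]
          congr 1
          rw [Multiset.map_const', Multiset.prod_replicate, hcard]
      _ ≤ (R.map fun a => ‖(γ:ℂ) - a‖).prod := by
          refine multiset_prod_le R _ _ (fun a ha => ?_) helt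
          positivity
      _ = ‖gp.eval (ξ:ℂ)‖ := hg.symm
  -- final contradiction
  set Sg : ℝ := ∑ k ∈ range (n-1), ‖gp.coeff k‖ with hSg
  set Sr : ℝ := ∑ k ∈ range (n-1), ‖r.coeff k‖ with hSr
  have hLpos : 0 < c ^ n * ‖L‖ := mul_pos (pow_pos hc0 n) (norm_pos_iff.2 hL)
  set ξ : ℝ := max 1 ((Sg + c ^ n * Sr) / (c ^ n * ‖L‖) + 1) with hξdef
  have hξ1 : 1 ≤ ξ := le_max_left _ _
  have hξ0 : 0 < ξ := by linarith
  have hgU := eval_norm_le gp (n-1) hgdeg ξ hξ1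
  have hrU := eval_norm_le r (n-1) hrdeg ξ hξ1
  have hH : hp.eval (ξ:ℂ) = L * (ξ:ℂ) ^ (n-1) + r.eval (ξ:ℂ) := by
    have h : hp = C L * X ^ (n-1) + r := by rw [hrdef]; ring
    rw [h]
    simp
  have hLn : ‖L * (ξ:ℂ) ^ (n-1)‖ = ‖L‖ * ξ ^ (n-1) := by
    rw [norm_mul, norm_pow, Complex.norm_real, Real.norm_eq_abs, _root_.abs_of_nonneg hξ0.le]
  have h1 : ‖L‖ * ξ ^ (n-1) - ‖r.eval (ξ:ℂ)‖ ≤ ‖hp.eval (ξ:ℂ)‖ := by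
    have h2 : L * (ξ:ℂ) ^ (n-1) = hp.eval (ξ:ℂ) - r.eval (ξ:ℂ) := by rw [hH]; ring
    have h3 := norm_sub_le (hp.eval (ξ:ℂ)) (r.eval (ξ:ℂ))
    rw [← h2, hLn] at h3
    linarith
  have hp1 : 0 < ξ ^ (n-1) := pow_pos hξ0 _
  -- chain
  have hchain : c ^ n * ‖L‖ * ξ * ξ ^ (n-1) ≤ (Sg + c ^ n * Sr) * ξ ^ (n-1) := by
    have e1 : c ^ n * ‖hp.eval (ξ:ℂ)‖ * ξ ≤ ‖gp.eval (ξ:ℂ)‖ * ξ :=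
      mul_le_mul_of_nonneg_right (hpoint ξ) hξ0.le
    have e2 : c ^ n * ((‖L‖ * ξ ^ (n-1) - ‖r.eval (ξ:ℂ)‖) * ξ) ≤
        c ^ n * (‖hp.eval (ξ:ℂ)‖ * ξ) := by
      refine mul_le_mul_of_nonneg_left (mul_le_mul_of_nonneg_right h1 hξ0.le) (by positivity)
    have e3 : c ^ n * (‖r.eval (ξ:ℂ)‖ * ξ) ≤ c ^ n * (Sr * ξ ^ (n-1)) :=
      mul_le_mul_of_nonneg_left hrU (by positivity)
    nlinarith [hgU]
  have hfin : c ^ n * ‖L‖ * ξ ≤ Sg + c ^ n * Sr :=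
    le_of_mul_le_mul_right hchain hp1
  have hξbig : (Sg + c ^ n * Sr) / (c ^ n * ‖L‖) + 1 ≤ ξ := le_max_right _ _
  have : (Sg + c ^ n * Sr) + c ^ n * ‖L‖ ≤ c ^ n * ‖L‖ * ξ := by
    have := mul_le_mul_of_nonneg_left hξbig hLpos.le
    rw [mul_add, mul_one, mul_div_cancel₀ _ (ne_of_gt hLpos)] at this
    linarith
  linarith


end Stmt15Aux

open Stmt15Aux in
/-- If all spectral points of `-A∂ₓ + G` (equivalently, all eigenvalues of the Fourier symbols
`-iξA + G`, `ξ ∈ ℝ`) have real part `< -α₀`, with `A = P⁻¹DP`, `D = diagonal d` having distinct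
nonzero real entries, then each diagonal entry of `PGP⁻¹` is `≤ -α₀`. -/
theorem stmt15 (n : ℕ) (α₀ : ℝ) (hα₀ : 0 < α₀)
    (A G P : Matrix (Fin n) (Fin n) ℝ) (d : Fin n → ℝ)
    (hd : Function.Injective d) (hd0 : ∀ j, d j ≠ 0)
    (hP : IsUnit P.det) (hA : A = P⁻¹ * Matrix.diagonal d * P)
    (hspec : ∀ ξ : ℝ, ∀ lam ∈ spectrum ℂ
        ((-(Complex.I * ξ)) • A.map Complex.ofReal + G.map Complex.ofReal),
      lam.re < -α₀) :
    ∀ j, (P * G * P⁻¹) j j ≤ -α₀ := by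
  intro j
  by_contra hcon
  push_neg at hcon
  set γ : ℝ := (P * G * P⁻¹) j j with hγdef
  -- complexifications
  set Pc : Matrix (Fin n) (Fin n) ℂ := P.map Complex.ofReal with hPc
  set Ac : Matrix (Fin n) (Fin n) ℂ := A.map Complex.ofReal with hAc
  set Gc : Matrix (Fin n) (Fin n) ℂ := G.map Complex.ofReal with hGc
  set B : Matrix (Fin n) (Fin n) ℂ := (P * G * P⁻¹).map Complex.ofReal with hB
  have hmap : ∀ M N : Matrix (Fin n) (Fin n) ℝ,
      (M * N).map Complex.ofReal = M.map Complex.ofReal * N.map Complex.ofReal := by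
    intro M N
    exact Matrix.map_mul (f := Complex.ofRealHom)
  have hPcunit : IsUnit Pc.det := by
    rw [hPc, show P.map Complex.ofReal = Complex.ofRealHom.mapMatrix P from rfl,
      ← RingHom.map_det]
    exact hP.map Complex.ofRealHom
  have hPinv : Pc⁻¹ = (P⁻¹).map Complex.ofReal := by
    refine Matrix.inv_eq_right_inv ?_
    rw [hPc, ← hmap, Matrix.mul_nonsing_inv _ hP]
    simp [Matrix.map_one]
  have hPAP : Pc * Ac * Pc⁻¹ = Matrix.diagonal (fun k => (d k : ℂ)) := by
    rw [hPinv, hPc, hAc, ← hmap, ← hmap]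
    have : P * A * P⁻¹ = Matrix.diagonal d := by
      rw [hA]
      rw [show P * (P⁻¹ * Matrix.diagonal d * P) * P⁻¹
          = (P * P⁻¹) * Matrix.diagonal d * (P * P⁻¹) by
        simp only [Matrix.mul_assoc]]
      rw [Matrix.mul_nonsing_inv _ hP]
      simp
    rw [this]
    exact Matrix.diagonal_map (by simp)
  have hPGP : Pc * Gc * Pc⁻¹ = B := by
    rw [hPinv, hPc, hGc, hB, ← hmap, ← hmap]
  -- the shifted symbol
  set δ : Fin n → ℂ := fun k => (d j : ℂ) - (d k : ℂ) with hδdef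
  have hsp : ∀ ξ : ℝ, ∀ μ ∈ spectrum ℂ (B + (Complex.I * ξ) • Matrix.diagonal δ),
      μ.re < -α₀ := by
    intro ξ μ hμ
    set u : (Matrix (Fin n) (Fin n) ℂ)ˣ := ((Matrix.isUnit_iff_isUnit_det Pc).2 hPcunit).unit with hu
    have huc : (u : Matrix (Fin n) (Fin n) ℂ) = Pc := ((Matrix.isUnit_iff_isUnit_det Pc).2 hPcunit).unit_spec
    have huinv : ((u⁻¹ : (Matrix (Fin n) (Fin n) ℂ)ˣ) : Matrix (Fin n) (Fin n) ℂ) = Pc⁻¹ := by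
      rw [Matrix.coe_units_inv, huc]
    have hdiag : (Complex.I * ξ) • (Matrix.diagonal δ)
        = (Complex.I * ξ * (d j : ℂ)) • (1 : Matrix (Fin n) (Fin n) ℂ)
          - (Complex.I * ξ) • Matrix.diagonal (fun k => (d k : ℂ)) := by
      ext k l
      rcases eq_or_ne k l with rfl | hkl
      · simp only [Matrix.smul_apply, Matrix.sub_apply, Matrix.diagonal_apply_eq,
          Matrix.one_apply_eq, hδdef, smul_eq_mul]
        ring
      · simp [Matrix.smul_apply, Matrix.sub_apply, Matrix.diagonal_apply_ne _ hkl,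
          Matrix.one_apply_ne hkl]
    have hconj : B + (Complex.I * ξ) • Matrix.diagonal δ
        = algebraMap ℂ (Matrix (Fin n) (Fin n) ℂ) (Complex.I * ξ * (d j : ℂ))
          + (u : Matrix (Fin n) (Fin n) ℂ) *
            ((-(Complex.I * ξ)) • Ac + Gc) * ((u⁻¹ : (Matrix (Fin n) (Fin n) ℂ)ˣ) :
              Matrix (Fin n) (Fin n) ℂ) := by
      rw [huc, huinv, Matrix.mul_add, Matrix.add_mul, Matrix.mul_smul, Matrix.smul_mul,
        hPAP, hPGP, Algebra.algebraMap_eq_smul_one, hdiag, sub_eq_add_neg, ← neg_smul]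
      abel
    rw [hconj] at hμ
    rw [← spectrum.singleton_add_eq] at hμ
    rw [spectrum.units_conjugate] at hμ
    obtain ⟨x, hx, y, hy, rfl⟩ := Set.mem_add.1 hμ
    rw [Set.mem_singleton_iff] at hx
    subst hx
    have := hspec ξ y hy
    have hre : (Complex.I * ξ * (d j : ℂ)).re = 0 := by simp
    simp only [Complex.add_re, hre, zero_add]
    exact this
  exact key α₀ γ (by linarith) B δ j (by simp [hδdef]) (fun k hk => by
      simp only [hδdef, ne_eq, sub_eq_zero]
      have : d j ≠ d k := fun h => hk (hd h.symm)
      exact_mod_cast this) (by simp [hB, hγdef]) hsp
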